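/- Let n, m, l, N be positive integers with l ≤ N = n. Let X ∈ ℂ^{n×n} be invertible, let B̃ ∈ ℂ^{n×m} with columns b̃_1,…,b̃_m, let L ∈ ℂ^{n×n} satisfy ‖L e_j‖_∞ ≤ 1 for every standard basis vector e_j, and let δ_1 ≥ δ_2 ≥ … ≥ δ_n ≥ 0 with δ_1 > 0. For j = 1,…,n define Z_j ∈ ℂ^{n×m} as the matrix whose p-th column is X · diag(X^{-1} b̃_p) · (L e_j), and set W := Σ_{j=1}^{n} δ_j Z_j Z_j^* and Ŵ_l := Σ_{j=1}^{l} δ_j Z_j Z_j^*. If ε > 0 and δ_l / δ_1 < ε, then Ŵ_l has rank at most l·m and ‖W − Ŵ_l‖_∞ ≤ ε · δ_1 · (m n) · (n − l) · (κ_∞(X) · ‖B̃‖_1)^2. -/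

import Mathlib

open Matrix

/-- The induced `∞`-norm (maximum absolute row sum) of a complex matrix. -/
noncomputable def matInfNorm {n m : ℕ} (M : Matrix (Fin n) (Fin m) ℂ) : ℝ :=
  ⨆ i, ∑ j, ‖M i j‖

/-- The induced `1`-norm (maximum absolute column sum) of a complex matrix. -/
noncomputable def matOneNorm {n m : ℕ} (M : Matrix (Fin n) (Fin m) ℂ) : ℝ :=
  ⨆ j, ∑ i, ‖M i j‖

/-- The `∞`-norm (maximum absolute entry) of a complex vector. -/
noncomputable def vecInfNorm {n : ℕ} (v : Fin n → ℂ) : ℝ :=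
  ⨆ i, ‖v i‖

/-- The `∞`-norm condition number `κ_∞(X) = ‖X‖_∞ ‖X⁻¹‖_∞`. -/
noncomputable def condInf {n : ℕ} (X : Matrix (Fin n) (Fin n) ℂ) : ℝ :=
  matInfNorm X * matInfNorm X⁻¹

/-- `Z_j ∈ ℂ^{n×m}`: the matrix whose `p`-th column is `X · diag(X⁻¹ b̃_p) · (L e_j)`,
where `b̃_p` is the `p`-th column of `B̃` and `e_j` is the `j`-th standard basis vector. -/
noncomputable def Zmat {n m : ℕ} (X : Matrix (Fin n) (Fin n) ℂ)
    (Btil : Matrix (Fin n) (Fin m) ℂ) (L : Matrix (Fin n) (Fin n) ℂ) (j : Fin n) :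
    Matrix (Fin n) (Fin m) ℂ :=
  Matrix.of fun i p =>
    (X *ᵥ (Matrix.diagonal (X⁻¹ *ᵥ fun q => Btil q p) *ᵥ (L *ᵥ Pi.single j 1))) i

/-! ### Auxiliary lemmas -/

lemma aux_le_iSup {k : ℕ} (f : Fin k → ℝ) (i : Fin k) : f i ≤ ⨆ i, f i :=
  le_ciSup ((Set.finite_range f).bddAbove) i

lemma aux_rowSum_le_matInfNorm {k j : ℕ} (M : Matrix (Fin k) (Fin j) ℂ) (i : Fin k) :
    ∑ p, ‖M i p‖ ≤ matInfNorm M := by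
  unfold matInfNorm
  exact aux_le_iSup (fun i => ∑ p, ‖M i p‖) i

lemma aux_matInfNorm_le {k j : ℕ} (hk : 0 < k) (M : Matrix (Fin k) (Fin j) ℂ) (c : ℝ)
    (h : ∀ i, ∑ p, ‖M i p‖ ≤ c) : matInfNorm M ≤ c := by
  haveI : Nonempty (Fin k) := ⟨⟨0, hk⟩⟩
  unfold matInfNorm
  exact ciSup_le h

lemma aux_matInfNorm_nonneg {k j : ℕ} (hk : 0 < k) (M : Matrix (Fin k) (Fin j) ℂ) :
    0 ≤ matInfNorm M :=
  le_trans (Finset.sum_nonneg fun _ _ => norm_nonneg _)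
    (aux_rowSum_le_matInfNorm M ⟨0, hk⟩)

lemma aux_entry_le_matOneNorm {k j : ℕ} (M : Matrix (Fin k) (Fin j) ℂ) (q : Fin k) (p : Fin j) :
    ‖M q p‖ ≤ matOneNorm M := by
  unfold matOneNorm
  refine le_trans ?_ (aux_le_iSup (fun p => ∑ i, ‖M i p‖) p)
  exact Finset.single_le_sum (f := fun i => ‖M i p‖) (fun i _ => norm_nonneg _) (Finset.mem_univ q)

lemma aux_matOneNorm_nonneg {k j : ℕ} (hj : 0 < j) (M : Matrix (Fin k) (Fin j) ℂ) :
    0 ≤ matOneNorm M := by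
  unfold matOneNorm
  exact le_trans (Finset.sum_nonneg fun _ _ => norm_nonneg _)
    (aux_le_iSup (fun p => ∑ i, ‖M i p‖) ⟨0, hj⟩)

lemma aux_rank_add_le {k : ℕ} (A B : Matrix (Fin k) (Fin k) ℂ) :
    (A + B).rank ≤ A.rank + B.rank := by
  rw [Matrix.rank, Matrix.rank, Matrix.rank, mulVecLin_add]
  have h : LinearMap.range (A.mulVecLin + B.mulVecLin) ≤
      LinearMap.range A.mulVecLin ⊔ LinearMap.range B.mulVecLin := by
    rintro x ⟨y, rfl⟩
    exact Submodule.add_mem_sup (LinearMap.mem_range_self _ y) (LinearMap.mem_range_self _ y)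
  exact (Submodule.finrank_mono h).trans (Submodule.finrank_add_le_finrank_add_finrank _ _)

lemma aux_rank_smul_le (r : ℝ) {k j : ℕ} (A : Matrix (Fin k) (Fin j) ℂ) :
    (r • A).rank ≤ A.rank := by
  have : r • A = ((r : ℂ) • (1 : Matrix (Fin k) (Fin k) ℂ)) * A := by
    rw [Matrix.smul_mul, Matrix.one_mul]; ext i p; simp [Complex.real_smul]
  rw [this]; exact Matrix.rank_mul_le_right _ _

lemma aux_rank_sum_le {ι : Type*} {k : ℕ} (s : Finset ι) (f : ι → Matrix (Fin k) (Fin k) ℂ) :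
    (∑ j ∈ s, f j).rank ≤ ∑ j ∈ s, (f j).rank := by
  classical
  induction s using Finset.cons_induction with
  | empty => simp
  | cons a s ha ih =>
    rw [Finset.sum_cons, Finset.sum_cons]
    exact (aux_rank_add_le _ _).trans (add_le_add_right ih _)

/-- Entrywise bound on `Zmat`. -/
lemma aux_Zmat_entry_le {n m : ℕ} (hn : 0 < n) (hm : 0 < m)
    (X : Matrix (Fin n) (Fin n) ℂ) (Btil : Matrix (Fin n) (Fin m) ℂ)
    (L : Matrix (Fin n) (Fin n) ℂ)
    (hL : ∀ j : Fin n, vecInfNorm (L *ᵥ Pi.single j 1) ≤ 1)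
    (j : Fin n) (i : Fin n) (p : Fin m) :
    ‖Zmat X Btil L j i p‖ ≤
      matInfNorm X * (matInfNorm X⁻¹ * matOneNorm Btil) := by
  set v : Fin n → ℂ := X⁻¹ *ᵥ fun q => Btil q p with hv
  set w : Fin n → ℂ := L *ᵥ Pi.single j 1 with hw
  have hB0 : 0 ≤ matOneNorm Btil := aux_matOneNorm_nonneg hm Btil
  have hXi0 : 0 ≤ matInfNorm X⁻¹ := aux_matInfNorm_nonneg hn X⁻¹
  have hvle : ∀ k : Fin n, ‖v k‖ ≤ matInfNorm X⁻¹ * matOneNorm Btil := by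
    intro k
    have h1 : ‖v k‖ ≤ ∑ q, ‖X⁻¹ k q * Btil q p‖ := by
      show ‖∑ q, X⁻¹ k q * Btil q p‖ ≤ _
      exact norm_sum_le _ _
    refine h1.trans ?_
    have h2 : ∑ q, ‖X⁻¹ k q * Btil q p‖ ≤
        ∑ q, ‖X⁻¹ k q‖ * matOneNorm Btil := by
      refine Finset.sum_le_sum fun q _ => ?_
      rw [norm_mul]
      exact mul_le_mul_of_nonneg_left (aux_entry_le_matOneNorm Btil q p)
        (norm_nonneg _)
    refine h2.trans ?_
    rw [← Finset.sum_mul]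
    exact mul_le_mul_of_nonneg_right (aux_rowSum_le_matInfNorm X⁻¹ k) hB0
  have hwle : ∀ k : Fin n, ‖w k‖ ≤ 1 := fun k =>
    le_trans (aux_le_iSup (fun i => ‖w i‖) k) (hL j)
  have hZeq : Zmat X Btil L j i p = ∑ k, X i k * (v k * w k) := by
    show (X *ᵥ (Matrix.diagonal v *ᵥ w)) i = _
    rw [Matrix.mulVec, dotProduct]
    exact Finset.sum_congr rfl fun k _ => by rw [Matrix.mulVec_diagonal]
  rw [hZeq]
  refine le_trans (norm_sum_le _ _) ?_
  have step : ∀ k : Fin n, ‖X i k * (v k * w k)‖ ≤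
      ‖X i k‖ * (matInfNorm X⁻¹ * matOneNorm Btil) := by
    intro k
    rw [norm_mul, norm_mul]
    refine mul_le_mul_of_nonneg_left ?_ (norm_nonneg _)
    calc ‖v k‖ * ‖w k‖
        ≤ (matInfNorm X⁻¹ * matOneNorm Btil) * 1 :=
          mul_le_mul (hvle k) (hwle k) (norm_nonneg _) (mul_nonneg hXi0 hB0)
      _ = matInfNorm X⁻¹ * matOneNorm Btil := mul_one _
  refine le_trans (Finset.sum_le_sum fun k _ => step k) ?_
  rw [← Finset.sum_mul]
  exact mul_le_mul_of_nonneg_right (aux_rowSum_le_matInfNorm X i) (mul_nonneg hXi0 hB0)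

theorem lowRank_gramian_approximation {n m l N : ℕ}
    (hn : 0 < n) (hm : 0 < m) (hl : 0 < l) (hN : 0 < N) (hNn : N = n) (hlN : l ≤ N)
    (X : Matrix (Fin n) (Fin n) ℂ) (hX : IsUnit X.det)
    (Btil : Matrix (Fin n) (Fin m) ℂ)
    (L : Matrix (Fin n) (Fin n) ℂ)
    (hL : ∀ j : Fin n, vecInfNorm (L *ᵥ Pi.single j 1) ≤ 1)
    (δ : Fin n → ℝ)
    (hδmono : ∀ i j : Fin n, i ≤ j → δ j ≤ δ i)
    (hδnonneg : ∀ j, 0 ≤ δ j)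
    (hδ1 : 0 < δ ⟨0, hn⟩)
    (ε : ℝ) (hε : 0 < ε)
    (hratio : δ ⟨l - 1, by omega⟩ / δ ⟨0, hn⟩ < ε) :
    (∑ j ∈ Finset.univ.filter (fun j : Fin n => (j : ℕ) < l),
        δ j • (Zmat X Btil L j * (Zmat X Btil L j)ᴴ)).rank ≤ l * m ∧
      matInfNorm
          ((∑ j : Fin n, δ j • (Zmat X Btil L j * (Zmat X Btil L j)ᴴ)) -
            ∑ j ∈ Finset.univ.filter (fun j : Fin n => (j : ℕ) < l),
              δ j • (Zmat X Btil L j * (Zmat X Btil L j)ᴴ)) ≤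
        ε * δ ⟨0, hn⟩ * (m * n) * (n - l) * (condInf X * matOneNorm Btil) ^ 2 := by
  have hln : l ≤ n := hNn ▸ hlN
  set Z := fun j : Fin n => Zmat X Btil L j with hZ
  set M := fun j : Fin n => Z j * (Z j)ᴴ with hM
  constructor
  · -- rank bound
    refine le_trans (aux_rank_sum_le _ _) ?_
    have hcard : (Finset.univ.filter (fun j : Fin n => (j : ℕ) < l)).card ≤ l := by
      have := Finset.card_le_card_of_injOn
        (s := Finset.univ.filter (fun j : Fin n => (j : ℕ) < l))
        (t := Finset.range l) (fun j : Fin n => (j : ℕ))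
        (fun j hj => Finset.mem_range.mpr (Finset.mem_filter.mp hj).2)
        (fun a _ b _ hab => Fin.val_injective hab)
      exact this.trans_eq (Finset.card_range l)
    calc ∑ j ∈ Finset.univ.filter (fun j : Fin n => (j : ℕ) < l), (δ j • M j).rank
        ≤ ∑ j ∈ Finset.univ.filter (fun j : Fin n => (j : ℕ) < l), m := by
          refine Finset.sum_le_sum fun j _ => ?_
          refine (aux_rank_smul_le _ _).trans ?_
          exact (Matrix.rank_mul_le_left _ _).trans (Matrix.rank_le_width _)
      _ = (Finset.univ.filter (fun j : Fin n => (j : ℕ) < l)).card * m := by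
          rw [Finset.sum_const, smul_eq_mul]
      _ ≤ l * m := Nat.mul_le_mul_right m hcard
  · -- norm bound
    set C : ℝ := matInfNorm X * (matInfNorm X⁻¹ * matOneNorm Btil) with hC
    have hC0 : 0 ≤ C :=
      mul_nonneg (aux_matInfNorm_nonneg hn X)
        (mul_nonneg (aux_matInfNorm_nonneg hn X⁻¹) (aux_matOneNorm_nonneg hm Btil))
    have hCcond : condInf X * matOneNorm Btil = C := by
      rw [hC, condInf, mul_assoc]
    set s := Finset.univ.filter (fun j : Fin n => ¬ (j : ℕ) < l) with hs
    have hdiff : (∑ j : Fin n, δ j • M j) -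
        ∑ j ∈ Finset.univ.filter (fun j : Fin n => (j : ℕ) < l), δ j • M j =
        ∑ j ∈ s, δ j • M j := by
      rw [hs, ← Finset.sum_filter_add_sum_filter_not Finset.univ
        (fun j : Fin n => (j : ℕ) < l) (fun j => δ j • M j)]
      exact add_sub_cancel_left _ _
    rw [hdiff]
    -- card of tail
    have hcards : (s.card : ℝ) ≤ (n : ℝ) - l := by
      have h1 : l ≤ (Finset.univ.filter (fun j : Fin n => (j : ℕ) < l)).card := by
        have := Finset.card_le_card_of_injOn
          (fun a : ℕ => (⟨a % n, Nat.mod_lt _ hn⟩ : Fin n))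
          (s := Finset.range l)
          (t := Finset.univ.filter (fun j : Fin n => (j : ℕ) < l))
          (fun a ha => by
            have hal : a < l := Finset.mem_range.mp ha
            simp [Nat.mod_eq_of_lt (lt_of_lt_of_le hal hln), hal])
          (fun a ha b hb hab => by
            have hal : a < l := Finset.mem_range.mp ha
            have hbl : b < l := Finset.mem_range.mp hb
            have := congrArg Fin.val hab
            simpa [Nat.mod_eq_of_lt (lt_of_lt_of_le hal hln),
              Nat.mod_eq_of_lt (lt_of_lt_of_le hbl hln)] using this)
        exact le_trans (le_of_eq (Finset.card_range l).symm) this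
      have h2 : (Finset.univ.filter (fun j : Fin n => (j : ℕ) < l)).card + s.card = n := by
        rw [hs, Finset.card_filter_add_card_filter_not, Finset.card_univ,
          Fintype.card_fin]
      have h3 : s.card ≤ n - l := by omega
      have h4 : ((n - l : ℕ) : ℝ) = (n : ℝ) - l := by
        rw [Nat.cast_sub hln]
      calc (s.card : ℝ) ≤ ((n - l : ℕ) : ℝ) := Nat.cast_le.mpr h3
        _ = (n : ℝ) - l := h4
    -- tail weights
    have hδsmall : ∀ j ∈ s, δ j ≤ ε * δ ⟨0, hn⟩ := by
      intro j hj
      simp only [hs, Finset.mem_filter, Finset.mem_univ, true_and, not_lt] at hj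
      have h1 : δ j ≤ δ ⟨l - 1, by omega⟩ := by
        refine hδmono _ _ ?_
        refine Fin.le_def.mpr ?_
        simp only []
        omega
      have h2 : δ ⟨l - 1, by omega⟩ < ε * δ ⟨0, hn⟩ := (div_lt_iff₀ hδ1).mp hratio
      linarith
    have hsumδ : ∑ j ∈ s, δ j ≤ ((n : ℝ) - l) * (ε * δ ⟨0, hn⟩) := by
      calc ∑ j ∈ s, δ j ≤ s.card • (ε * δ ⟨0, hn⟩) := Finset.sum_le_card_nsmul _ _ _ hδsmall
        _ = (s.card : ℝ) * (ε * δ ⟨0, hn⟩) := by rw [nsmul_eq_mul]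
        _ ≤ ((n : ℝ) - l) * (ε * δ ⟨0, hn⟩) :=
            mul_le_mul_of_nonneg_right hcards (by positivity)
    -- entrywise bound on M j
    have hMent : ∀ (j : Fin n) (i i' : Fin n), ‖M j i i'‖ ≤ m * C ^ 2 := by
      intro j i i'
      have hMeq : M j i i' = ∑ p, Z j i p * star (Z j i' p) := by
        show (Z j * (Z j)ᴴ) i i' = _
        rw [Matrix.mul_apply]
        exact Finset.sum_congr rfl fun p _ => rfl
      rw [hMeq]
      refine le_trans (norm_sum_le _ _) ?_
      calc ∑ p, ‖Z j i p * star (Z j i' p)‖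
          ≤ ∑ _p : Fin m, C ^ 2 := by
            refine Finset.sum_le_sum fun p _ => ?_
            rw [norm_mul]
            have hstar : ‖star (Z j i' p)‖ = ‖Z j i' p‖ :=
              Complex.norm_conj _
            rw [hstar, sq]
            exact mul_le_mul (aux_Zmat_entry_le hn hm X Btil L hL j i p)
              (aux_Zmat_entry_le hn hm X Btil L hL j i' p) (norm_nonneg _) hC0
        _ = m * C ^ 2 := by
            rw [Finset.sum_const, Finset.card_univ, Fintype.card_fin, nsmul_eq_mul]
    -- entrywise bound on the tail sum
    have hent : ∀ i i' : Fin n, ‖(∑ j ∈ s, δ j • M j) i i'‖ ≤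
        (∑ j ∈ s, δ j) * (m * C ^ 2) := by
      intro i i'
      have happ : (∑ j ∈ s, δ j • M j) i i' = ∑ j ∈ s, δ j • (M j i i') := by
        simp [Matrix.sum_apply, Matrix.smul_apply]
      rw [happ]
      refine le_trans (norm_sum_le _ _) ?_
      rw [Finset.sum_mul]
      refine Finset.sum_le_sum fun j hj => ?_
      rw [Complex.real_smul, norm_mul, Complex.norm_real, Real.norm_of_nonneg (hδnonneg j)]
      exact mul_le_mul_of_nonneg_left (hMent j i i') (hδnonneg j)
    -- assemble
    have hfin : matInfNorm (∑ j ∈ s, δ j • M j) ≤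
        (n : ℝ) * ((∑ j ∈ s, δ j) * (m * C ^ 2)) := by
      refine aux_matInfNorm_le hn _ _ fun i => ?_
      calc ∑ i', ‖(∑ j ∈ s, δ j • M j) i i'‖
          ≤ ∑ _i' : Fin n, (∑ j ∈ s, δ j) * (m * C ^ 2) :=
            Finset.sum_le_sum fun i' _ => hent i i'
        _ = (n : ℝ) * ((∑ j ∈ s, δ j) * (m * C ^ 2)) := by
            rw [Finset.sum_const, Finset.card_univ, Fintype.card_fin, nsmul_eq_mul]
    refine hfin.trans ?_
    rw [hCcond]
    have hmono : (n : ℝ) * ((∑ j ∈ s, δ j) * (m * C ^ 2)) ≤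
        (n : ℝ) * ((((n : ℝ) - l) * (ε * δ ⟨0, hn⟩)) * (m * C ^ 2)) := by
      refine mul_le_mul_of_nonneg_left ?_ (Nat.cast_nonneg n)
      exact mul_le_mul_of_nonneg_right hsumδ (by positivity)
    refine hmono.trans (le_of_eq ?_)
    ring
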